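/- arXiv:1908.10185 — 4 statements merged into one kernel-verified Lean document; each statement's English description precedes it below -/
import Mathlib

section
/- Let I be an 𝔪-primary monomial ideal in K[x_1,…,x_n]. The following are equivalent: (1) I is good; (2) for every l ≥ 1 and every monomial m ∈ I^l there exist nonnegative integers a_1,…,a_n such that m lies in the box B_{a_1,…,a_n} and a_1+⋯+a_n ≥ l−1; (3) for every l ≥ 1 and all m_1,…,m_l ∈ G(I) there exist nonnegative integers a_1,…,a_n such that the product m_1⋯m_l lies in the box B_{a_1,…,a_n} and a_1+⋯+a_n ≥ l−1. -/
open MvPolynomial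

namespace GasanovaRR

/-- The monomial `x^α` in `K[x_1,…,x_n]`. -/
noncomputable def mono (K : Type*) [Field K] {n : ℕ} (α : Fin n → ℕ) :
    MvPolynomial (Fin n) K :=
  MvPolynomial.monomial (Finsupp.equivFunOnFinite.symm α) 1

/-- `I` is a monomial ideal: it is generated by a set of monomials. -/
def IsMonomialIdeal {K : Type*} [Field K] {n : ℕ}
    (I : Ideal (MvPolynomial (Fin n) K)) : Prop :=
  ∃ A : Set (Fin n → ℕ), I = Ideal.span (mono K '' A)

/-- `x^α` is a minimal monomial generator of `I`, i.e. `x^α ∈ G(I)`: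
`x^α ∈ I` and no monomial in `I` strictly divides it. -/
def IsMinGen {K : Type*} [Field K] {n : ℕ}
    (I : Ideal (MvPolynomial (Fin n) K)) (α : Fin n → ℕ) : Prop :=
  mono K α ∈ I ∧ ∀ β : Fin n → ℕ, mono K β ∈ I → β ≤ α → β = α

/-- The point `α` lies in the box `B_{a_1,…,a_n}` (for box sizes `d_1,…,d_n`). -/
def InBox {n : ℕ} (d a α : Fin n → ℕ) : Prop :=
  ∀ i, a i * d i ≤ α i ∧ α i ≤ (a i + 1) * d i

/-- `I` is a good ideal (w.r.t. box sizes `d`): for every `l ≥ 1`, every minimal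
generator of `I^l` lies in a box whose coordinate sum is `l - 1`. -/
def IsGood {K : Type*} [Field K] {n : ℕ}
    (I : Ideal (MvPolynomial (Fin n) K)) (d : Fin n → ℕ) : Prop :=
  ∀ l : ℕ, 1 ≤ l → ∀ α : Fin n → ℕ, IsMinGen (I ^ l) α →
    ∃ a : Fin n → ℕ, InBox d a α ∧ ∑ i, a i = l - 1

/-- `I` is an `𝔪`-primary monomial ideal whose minimal generating set contains
`μ_i = x_i^{d_i}` with `d_i > 0` for each `i`. -/
def MPrimaryWithCorners {K : Type*} [Field K] {n : ℕ}
    (I : Ideal (MvPolynomial (Fin n) K)) (d : Fin n → ℕ) : Prop :=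
  IsMonomialIdeal I ∧ I ≠ ⊤ ∧ (∀ i, 0 < d i) ∧ ∀ i, IsMinGen I (Pi.single i (d i))

/-- The ideal `I_{a_1,…,a_n}` associated to the box `B_{a_1,…,a_n}`, generated by
`m / (μ_1^{a_1}⋯μ_n^{a_n})` for `m ∈ B_{a_1,…,a_n} ∩ G(I^l)`, `l = a_1+⋯+a_n+1`. -/
noncomputable def boxIdeal {K : Type*} [Field K] {n : ℕ}
    (I : Ideal (MvPolynomial (Fin n) K)) (d a : Fin n → ℕ) :
    Ideal (MvPolynomial (Fin n) K) :=
  Ideal.span ((fun α => mono K (α - fun i => a i * d i)) ''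
    {α | InBox d a α ∧ IsMinGen (I ^ (∑ i, a i + 1)) α})

/-- The Ratliff–Rush closure `Ĩ = ⋃_{k ≥ 0} (I^{k+1} : I^k)`. -/
noncomputable def ratliffRush {K : Type*} [Field K] {n : ℕ}
    (I : Ideal (MvPolynomial (Fin n) K)) : Ideal (MvPolynomial (Fin n) K) :=
  ⨆ k : ℕ, (I ^ (k + 1)).colon ((I ^ k : Ideal (MvPolynomial (Fin n) K)) : Set (MvPolynomial (Fin n) K))

/-- The cone in `ℕ^n` with set `S` of fixed coordinates and vertex `v`. -/
def Cone {n : ℕ} (S : Set (Fin n)) (v : Fin n → ℕ) : Set (Fin n → ℕ) :=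
  {b | (∀ i ∈ S, b i = v i) ∧ ∀ i ∉ S, v i ≤ b i}

/-- `I` is a very good ideal: it is good and `I_{a_1,…,a_n} = I` for all boxes. -/
def IsVeryGood {K : Type*} [Field K] {n : ℕ}
    (I : Ideal (MvPolynomial (Fin n) K)) (d : Fin n → ℕ) : Prop :=
  IsGood I d ∧ ∀ a : Fin n → ℕ, boxIdeal I d a = I

section Aux

variable {K : Type*} [Field K] {n : ℕ}

lemma symm_add (α β : Fin n → ℕ) :
    Finsupp.equivFunOnFinite.symm (α + β)
      = Finsupp.equivFunOnFinite.symm α + Finsupp.equivFunOnFinite.symm β := by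
  ext i; simp

lemma mono_mul (α β : Fin n → ℕ) : mono K α * mono K β = mono K (α + β) := by
  simp [mono, monomial_mul, symm_add]

lemma mono_zero : mono K (0 : Fin n → ℕ) = 1 := by
  have : Finsupp.equivFunOnFinite.symm (0 : Fin n → ℕ) = 0 := by ext i; simp
  simp [mono, this]

lemma mono_prod {ι : Type*} (s : Finset ι) (f : ι → Fin n → ℕ) :
    ∏ j ∈ s, mono K (f j) = mono K (∑ j ∈ s, f j) := by
  classical
  induction s using Finset.cons_induction with
  | empty => simp [mono_zero]
  | cons a s ha ih => rw [Finset.prod_cons, Finset.sum_cons, ih, mono_mul]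

lemma mono_pow (α : Fin n → ℕ) (k : ℕ) : mono K α ^ k = mono K (k • α) := by
  have : Finsupp.equivFunOnFinite.symm (k • α) = k • Finsupp.equivFunOnFinite.symm α := by
    ext i; simp
  rw [mono, mono, monomial_pow, one_pow, this]

lemma prod_mem_pow {R : Type*} [CommSemiring R] (I : Ideal R) {ι : Type*} (s : Finset ι)
    (f : ι → R) (e : ι → ℕ) (h : ∀ j ∈ s, f j ∈ I ^ e j) :
    (∏ j ∈ s, f j) ∈ I ^ (∑ j ∈ s, e j) := by
  classical
  induction s using Finset.cons_induction with
  | empty => simp [Ideal.one_eq_top]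
  | cons a s ha ih =>
    rw [Finset.prod_cons, Finset.sum_cons, pow_add]
    exact Ideal.mul_mem_mul (h a (Finset.mem_cons_self a s))
      (ih fun j hj => h j (Finset.mem_cons_of_mem hj))

lemma exists_minGen_le (J : Ideal (MvPolynomial (Fin n) K)) {α : Fin n → ℕ}
    (h : mono K α ∈ J) : ∃ β, β ≤ α ∧ IsMinGen J β := by
  classical
  set P : ℕ → Prop := fun k =>
    ∃ β : Fin n → ℕ, β ≤ α ∧ mono K β ∈ J ∧ ∑ i, β i = k with hP
  have hex : ∃ k, P k := ⟨∑ i, α i, α, le_refl _, h, rfl⟩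
  obtain ⟨β, hβα, hβJ, hβk⟩ := Nat.find_spec hex
  refine ⟨β, hβα, hβJ, fun γ hγJ hγβ => ?_⟩
  have hγα : γ ≤ α := le_trans hγβ hβα
  have hk : Nat.find hex ≤ ∑ i, γ i := Nat.find_min' hex ⟨γ, hγα, hγJ, rfl⟩
  have hsum : ∑ i, γ i = ∑ i, β i := by
    have h1 : ∑ i, γ i ≤ ∑ i, β i := Finset.sum_le_sum fun i _ => hγβ i
    omega
  funext i
  by_contra hne
  have hlt : γ i < β i := lt_of_le_of_ne (hγβ i) hne
  have : ∑ i, γ i < ∑ i, β i :=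
    Finset.sum_lt_sum (fun i _ => hγβ i) ⟨i, Finset.mem_univ i, hlt⟩
  omega

lemma mem_pow_extract {I : Ideal (MvPolynomial (Fin n) K)} (hI : IsMonomialIdeal I)
    {l : ℕ} {α : Fin n → ℕ} (h : mono K α ∈ I ^ l) :
    ∃ m : Fin l → (Fin n → ℕ), (∀ j, mono K (m j) ∈ I) ∧ ∑ j, m j ≤ α := by
  classical
  obtain ⟨A, hA⟩ := hI
  have hpow : I ^ l = Ideal.span ((fun s => monomial s (1 : K)) ''
      {s | ∃ m : Fin l → (Fin n → ℕ), (∀ j, m j ∈ A) ∧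
        s = Finsupp.equivFunOnFinite.symm (∑ j, m j)}) := by
    rw [hA, ← Ideal.submodule_span_eq, Submodule.span_pow, Ideal.submodule_span_eq]
    congr 1
    ext p
    simp only [Set.mem_pow, Set.mem_image, Set.mem_setOf_eq]
    constructor
    · rintro ⟨f, rfl⟩
      have hmem : ∀ i, (f i : MvPolynomial (Fin n) K) ∈ mono K '' A := fun i => (f i).2
      choose g hg hgf using hmem
      refine ⟨Finsupp.equivFunOnFinite.symm (∑ j, g j), ⟨g, hg, rfl⟩, ?_⟩
      rw [List.prod_ofFn]
      symm
      calc ∏ i, (f i : MvPolynomial (Fin n) K) = ∏ i, mono K (g i) := by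
            exact Finset.prod_congr rfl fun i _ => (hgf i).symm
        _ = mono K (∑ i, g i) := mono_prod _ _
        _ = monomial (Finsupp.equivFunOnFinite.symm (∑ j, g j)) 1 := rfl
    · rintro ⟨s, ⟨m, hm, rfl⟩, rfl⟩
      refine ⟨fun i => ⟨mono K (m i), Set.mem_image_of_mem _ (hm i)⟩, ?_⟩
      rw [List.prod_ofFn, mono_prod]
      rfl
  rw [hpow, mem_ideal_span_monomial_image] at h
  have hsupp : Finsupp.equivFunOnFinite.symm α ∈ (mono K α).support := by
    rw [mono, support_monomial]
    simp
  obtain ⟨si, ⟨m, hm, rfl⟩, hle⟩ := h _ hsupp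
  refine ⟨m, fun j => ?_, fun i => ?_⟩
  · rw [hA]; exact Ideal.subset_span (Set.mem_image_of_mem _ (hm j))
  · simpa using hle i


lemma single_mul_eq_smul (a d : Fin n → ℕ) (i : Fin n) :
    Pi.single i (a i * d i) = (a i • Pi.single i (d i) : Fin n → ℕ) := by
  funext j
  by_cases h : j = i <;> simp [h, Pi.single_apply, smul_eq_mul]

lemma corner_mem {I : Ideal (MvPolynomial (Fin n) K)} {d : Fin n → ℕ}
    (hμ : ∀ i, mono K (Pi.single i (d i)) ∈ I) (a : Fin n → ℕ) :
    mono K (fun i => a i * d i) ∈ I ^ (∑ i, a i) := by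
  have h1 : (fun i => a i * d i) = ∑ i, Pi.single i (a i * d i) :=
    (Finset.univ_sum_single _).symm
  rw [h1, ← mono_prod]
  apply prod_mem_pow
  intro j _
  rw [single_mul_eq_smul, ← mono_pow]
  exact Ideal.pow_mem_pow (hμ j) _


lemma mono_sum_mem_pow {I : Ideal (MvPolynomial (Fin n) K)} {l : ℕ}
    {m : Fin l → (Fin n → ℕ)} (h : ∀ j, mono K (m j) ∈ I) :
    mono K (∑ j, m j) ∈ I ^ l := by
  rw [← mono_prod]
  have := prod_mem_pow I Finset.univ (fun j => mono K (m j)) (fun _ => 1)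
    (fun j _ => by rw [pow_one]; exact h j)
  simpa using this

end Aux

/-- Proposition 3.5: for an `𝔪`-primary monomial ideal `I`, the following are
equivalent: (1) `I` is good; (2) every monomial in `I^l` (`l ≥ 1`) lies in a box
with coordinate sum `≥ l - 1`; (3) every product of `l` minimal generators of `I`
lies in a box with coordinate sum `≥ l - 1`. -/
theorem good_tfae {K : Type*} [Field K] {n : ℕ}
    (I : Ideal (MvPolynomial (Fin n) K)) (d : Fin n → ℕ)
    (hI : MPrimaryWithCorners I d) :
    List.TFAE
      [IsGood I d,
       ∀ l : ℕ, 1 ≤ l → ∀ α : Fin n → ℕ, mono K α ∈ I ^ l →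
         ∃ a : Fin n → ℕ, InBox d a α ∧ l - 1 ≤ ∑ i, a i,
       ∀ l : ℕ, 1 ≤ l → ∀ m : Fin l → (Fin n → ℕ), (∀ j, IsMinGen I (m j)) →
         ∃ a : Fin n → ℕ, InBox d a (∑ j, m j) ∧ l - 1 ≤ ∑ i, a i] := by
  obtain ⟨hmono, hne, hd, hμ⟩ := hI
  tfae_have 1 → 2 := by
    intro h1 l hl α hα
    obtain ⟨β, hβα, hβmin⟩ := exists_minGen_le _ hα
    obtain ⟨b, hbox, hsum⟩ := h1 l hl β hβmin
    refine ⟨fun i => α i / d i, fun i => ⟨Nat.div_mul_le_self _ _, ?_⟩, ?_⟩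
    · have hr : α i % d i < d i := Nat.mod_lt _ (hd i)
      calc α i = d i * (α i / d i) + α i % d i := (Nat.div_add_mod _ _).symm
        _ ≤ d i * (α i / d i) + d i := by omega
        _ = (α i / d i + 1) * d i := by ring
    · show l - 1 ≤ ∑ i, α i / d i
      have : ∑ i, b i ≤ ∑ i, α i / d i := by
        apply Finset.sum_le_sum
        intro i _
        exact (Nat.le_div_iff_mul_le (hd i)).2 (le_trans (hbox i).1 (hβα i))
      omega
  tfae_have 2 → 3 := by
    intro h2 l hl m hm
    exact h2 l hl _ (mono_sum_mem_pow fun j => (hm j).1)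
  tfae_have 3 → 1 := by
    intro h3 l hl α hα
    obtain ⟨m, hmI, hmle⟩ := mem_pow_extract hmono hα.1
    choose m' hle hmin using fun j => exists_minGen_le I (hmI j)
    have hsle : ∑ j, m' j ≤ α := le_trans (Finset.sum_le_sum fun j _ => hle j) hmle
    have heq : ∑ j, m' j = α := hα.2 _ (mono_sum_mem_pow fun j => (hmin j).1) hsle
    obtain ⟨a, hbox, hage⟩ := h3 l hl m' hmin
    rw [heq] at hbox
    rcases Nat.lt_or_ge (∑ i, a i) l with hcase | hcase
    · exact ⟨a, hbox, by omega⟩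
    · have hc2 : mono K (fun i => a i * d i) ∈ I ^ l :=
        Ideal.pow_le_pow_right hcase (corner_mem (fun i => (hμ i).1) a)
      have hαeq : (fun i => a i * d i) = α := hα.2 _ hc2 (fun i => (hbox i).1)
      have hal : ∑ i, a i = l := by
        by_contra hcon
        have hgt : l + 1 ≤ ∑ i, a i := by omega
        obtain ⟨j, _, hj⟩ : ∃ j ∈ Finset.univ, a j ≠ 0 :=
          Finset.exists_ne_zero_of_sum_ne_zero (by omega)
        set a' : Fin n → ℕ := Function.update a j (a j - 1) with ha'
        have hs' : ∑ i, a' i = ∑ i, a i - 1 := by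
          rw [ha', Finset.sum_update_of_mem (Finset.mem_univ j)]
          have := Finset.sum_eq_sum_sdiff_singleton_add (Finset.mem_univ j) a
          omega
        have hc3 : mono K (fun i => a' i * d i) ∈ I ^ l := by
          refine Ideal.pow_le_pow_right ?_ (corner_mem (fun i => (hμ i).1) a')
          omega
        have hle' : (fun i => a' i * d i) ≤ α := by
          intro i
          have h1 : a' i ≤ a i := by
            by_cases h : i = j
            · subst h; simp [ha']
            · simp [ha', Function.update_of_ne h]
          calc a' i * d i ≤ a i * d i := Nat.mul_le_mul_right _ h1
            _ ≤ α i := (hbox i).1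
        have heq2 := hα.2 _ hc3 hle'
        rw [← hαeq] at heq2
        have hj2 := congrFun heq2 j
        simp only [ha', Function.update_self] at hj2
        have : (a j - 1) * d j < a j * d j :=
          Nat.mul_lt_mul_of_lt_of_le (by omega) (le_refl _) (hd j)
        omega
      obtain ⟨j, _, hj⟩ : ∃ j ∈ Finset.univ, a j ≠ 0 :=
        Finset.exists_ne_zero_of_sum_ne_zero (by omega)
      refine ⟨Function.update a j (a j - 1), fun i => ?_, ?_⟩
      · have hi : α i = a i * d i := (congrFun hαeq i).symm
        by_cases h : i = j
        · subst h
          rw [Function.update_self, hi]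
          constructor
          · exact Nat.mul_le_mul_right _ (by omega)
          · have : a i - 1 + 1 = a i := by omega
            rw [this]
        · rw [Function.update_of_ne h, hi]
          exact ⟨le_refl _, Nat.mul_le_mul_right _ (by omega)⟩
      · rw [Finset.sum_update_of_mem (Finset.mem_univ j)]
        have := Finset.sum_eq_sum_sdiff_singleton_add (Finset.mem_univ j) a
        omega
  tfae_finish

end GasanovaRR
end

section
/- If I is a good ideal in K[x_1,…,x_n], then every minimal generator x_1^{α_1}x_2^{α_2}⋯x_n^{α_n} of I satisfies α_1/d_1 + α_2/d_2 + ⋯ + α_n/d_n ≥ 1. -/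
open MvPolynomial

namespace GasanovaRR

lemma mono_pow_s1 (K : Type*) [Field K] {n : ℕ} (α : Fin n → ℕ) (l : ℕ) :
    mono K α ^ l = mono K (fun i => l * α i) := by
  unfold mono
  rw [MvPolynomial.monomial_pow, one_pow]
  have : l • Finsupp.equivFunOnFinite.symm α
      = Finsupp.equivFunOnFinite.symm (fun i => l * α i) := by ext i; simp
  rw [this]

/-- Theorem 3.6 (necessary condition): if `I` is a good ideal, then every minimal
generator `x^α` of `I` satisfies `α_1/d_1 + ⋯ + α_n/d_n ≥ 1`. -/
theorem necessary_condition {K : Type*} [Field K] {n : ℕ}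
    (I : Ideal (MvPolynomial (Fin n) K)) (d : Fin n → ℕ)
    (hI : MPrimaryWithCorners I d) (hgood : IsGood I d) :
    ∀ α : Fin n → ℕ, IsMinGen I α → (1 : ℚ) ≤ ∑ i, (α i : ℚ) / (d i : ℚ) := by
  intro α hmin
  set s : ℚ := ∑ i, (α i : ℚ) / (d i : ℚ) with hs
  have hd : ∀ i, 0 < d i := hI.2.2.1
  -- key inequality for every l ≥ 1
  have key : ∀ l : ℕ, 1 ≤ l → (l : ℚ) - 1 ≤ l * s := by
    intro l hl
    set lα : Fin n → ℕ := fun i => l * α i with hlα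
    set S : Set (Fin n → ℕ) := {γ | mono K γ ∈ I ^ l ∧ γ ≤ lα} with hS
    have hlαS : lα ∈ S := by
      refine ⟨?_, le_refl _⟩
      rw [← mono_pow_s1]
      exact Ideal.pow_mem_pow hmin.1 l
    have hfin : S.Finite :=
      (Set.finite_Iic lα).subset (fun γ hγ => hγ.2)
    obtain ⟨β, hβS, hβmin⟩ : ∃ β ∈ S, ∀ γ ∈ S, γ ≤ β → β = γ := by
      obtain ⟨β, hβS, hβmin⟩ := hfin.exists_minimalFor id S ⟨lα, hlαS⟩
      exact ⟨β, hβS, fun γ hγ hγβ => le_antisymm (hβmin hγ hγβ) hγβ⟩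
    have hβgen : IsMinGen (I ^ l) β := by
      refine ⟨hβS.1, fun γ hγ hγβ => ?_⟩
      exact (hβmin γ ⟨hγ, le_trans hγβ hβS.2⟩ hγβ).symm
    obtain ⟨a, hbox, hsum⟩ := hgood l hl β hβgen
    have hcast : (∑ i, (a i : ℚ)) = (l : ℚ) - 1 := by
      have := congrArg (fun m : ℕ => (m : ℚ)) hsum
      push_cast [Nat.cast_sub hl] at this
      simpa using this
    calc (l : ℚ) - 1 = ∑ i, (a i : ℚ) := hcast.symm
      _ ≤ ∑ i, (β i : ℚ) / (d i : ℚ) := by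
          apply Finset.sum_le_sum
          intro i _
          rw [le_div_iff₀ (by exact_mod_cast hd i)]
          exact_mod_cast (hbox i).1
      _ ≤ ∑ i, (l : ℚ) * ((α i : ℚ) / (d i : ℚ)) := by
          apply Finset.sum_le_sum
          intro i _
          rw [mul_div_assoc']
          apply div_le_div_of_nonneg_right ?_ (by exact_mod_cast (hd i).le)
          exact_mod_cast hβS.2 i
      _ = (l : ℚ) * s := by rw [hs, Finset.mul_sum]
  by_contra hlt
  push_neg at hlt
  have hε : (0 : ℚ) < 1 - s := by linarith
  obtain ⟨m, hm⟩ := exists_nat_one_div_lt hε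
  have h1 := key (m + 1) (Nat.le_add_left 1 m)
  have hm0 : (0 : ℚ) < (m : ℚ) + 1 := by positivity
  rw [div_lt_iff₀ hm0] at hm
  push_cast at h1 hm
  nlinarith

end GasanovaRR
end

section
/- Given any cone C in ℕ^n of dimension k and any point a ∈ C, the cone C can be decomposed into a disjoint union of finitely many cones, exactly one of which has dimension k and vertex a, while all the others have dimension strictly less than k. -/
open MvPolynomial

namespace GasanovaRR

/-- Theorem 5.7: any cone `C` in `ℕ^n` of dimension `k = n - |S|` can, given any
point `a ∈ C`, be decomposed into a disjoint union of finitely many cones, exactly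
one of which has dimension `k` and vertex `a`, all others having strictly smaller
dimension. -/
theorem cone_decomposition {n : ℕ} (S : Finset (Fin n)) (v a : Fin n → ℕ)
    (ha : a ∈ Cone (↑S) v) :
    ∃ F : Finset (Finset (Fin n) × (Fin n → ℕ)),
      (⋃ c ∈ F, Cone (↑c.1) c.2) = Cone (↑S) v ∧
      (∀ c ∈ F, ∀ c' ∈ F, c ≠ c' →
        Disjoint (Cone (↑c.1) c.2) (Cone (↑c'.1) c'.2)) ∧
      ∃ c₀ ∈ F, c₀.2 = a ∧ n - c₀.1.card = n - S.card ∧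
        ∀ c ∈ F, c ≠ c₀ → n - c.1.card < n - S.card := by
  classical
  obtain ⟨haS, haS'⟩ := ha
  -- vertex of the piece indexed by free coordinate i and value t
  set w : Fin n → ℕ → (Fin n → ℕ) :=
    fun i t j => if j = i then t else if j < i then a j else v j with hw
  set F : Finset (Finset (Fin n) × (Fin n → ℕ)) :=
    insert (S, a) (Sᶜ.biUnion fun i =>
      (Finset.Ico (v i) (a i)).image fun t => (insert i S, w i t)) with hF
  have hmem : ∀ c, c ∈ F ↔ c = (S, a) ∨
      ∃ i, i ∉ S ∧ ∃ t, v i ≤ t ∧ t < a i ∧ c = (insert i S, w i t) := by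
    intro c
    simp only [hF, Finset.mem_insert, Finset.mem_biUnion, Finset.mem_compl,
      Finset.mem_image, Finset.mem_Ico]
    constructor
    · rintro (h | ⟨i, hi, t, ⟨h1, h2⟩, h3⟩)
      · exact Or.inl h
      · exact Or.inr ⟨i, hi, t, h1, h2, h3.symm⟩
    · rintro (h | ⟨i, hi, t, h1, h2, h3⟩)
      · exact Or.inl h
      · exact Or.inr ⟨i, hi, t, ⟨h1, h2⟩, h3.symm⟩
  -- membership in a piece cone, i free, v i ≤ t < a i
  have hpiece : ∀ i ∉ S, ∀ t b, b ∈ Cone (↑(insert i S) : Set (Fin n)) (w i t) ↔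
      (b i = t ∧ (∀ j ∈ S, b j = v j) ∧ (∀ j, j ∉ S → j < i → a j ≤ b j) ∧
        ∀ j, j ∉ S → i < j → v j ≤ b j) := by
    intro i hi t b
    constructor
    · rintro ⟨h1, h2⟩
      refine ⟨?_, ?_, ?_, ?_⟩
      · have := h1 i (by simp)
        simpa [hw] using this
      · intro j hj
        have hji : j ≠ i := fun h => hi (h ▸ hj)
        have := h1 j (by simp [hj])
        rcases lt_or_ge j i with hlt | hle
        · rw [this]; simp [hw, hji, hlt, haS j hj]
        · rw [this]; simp [hw, hji, not_lt.mpr hle]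
      · intro j hjS hji
        have hjne : j ≠ i := ne_of_lt hji
        have hj' : j ∉ insert i S := by simp [hjne, hjS]
        have := h2 j (by simpa using hj')
        simpa [hw, hjne, hji] using this
      · intro j hjS hji
        have hjne : j ≠ i := ne_of_gt hji
        have hj' : j ∉ insert i S := by simp [hjne, hjS]
        have := h2 j (by simpa using hj')
        simpa [hw, hjne, not_lt.mpr hji.le] using this
    · rintro ⟨h1, h2, h3, h4⟩
      constructor
      · intro j hj
        simp only [Finset.coe_insert, Set.mem_insert_iff, Finset.mem_coe] at hj
        rcases hj with rfl | hj
        · simpa [hw] using h1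
        · have hji : j ≠ i := fun h => hi (h ▸ hj)
          rcases lt_or_ge j i with hlt | hle
          · simp [hw, hji, hlt, haS j hj, h2 j hj]
          · simp [hw, hji, not_lt.mpr hle, h2 j hj]
      · intro j hj
        simp only [Finset.coe_insert, Set.mem_insert_iff, Finset.mem_coe, not_or] at hj
        obtain ⟨hji, hjS⟩ := hj
        rcases lt_trichotomy j i with hlt | heq | hgt
        · simpa [hw, hji, hlt] using h3 j hjS hlt
        · exact absurd heq hji
        · simpa [hw, hji, not_lt.mpr hgt.le] using h4 j hjS hgt
  have hScard : ∀ i : Fin n, i ∉ S → S.card < n := by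
    intro i hi
    have : S ⊂ Finset.univ := Finset.ssubset_univ_iff.mpr
      (fun h => hi (h ▸ Finset.mem_univ i))
    simpa using Finset.card_lt_card this
  refine ⟨F, ?_, ?_, (S, a), (hmem _).mpr (Or.inl rfl), rfl, rfl, ?_⟩
  · -- union equality
    ext b
    simp only [Set.mem_iUnion, exists_prop]
    constructor
    · rintro ⟨c, hc, hb⟩
      rcases (hmem c).mp hc with rfl | ⟨i, hi, t, ht1, ht2, rfl⟩
      · obtain ⟨h1, h2⟩ := hb
        exact ⟨fun j hj => (h1 j hj).trans (haS j hj),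
          fun j hj => le_trans (haS' j hj) (h2 j hj)⟩
      · rw [hpiece i hi t b] at hb
        obtain ⟨h1, h2, h3, h4⟩ := hb
        refine ⟨h2, fun j hj => ?_⟩
        rcases lt_trichotomy j i with hlt | rfl | hgt
        · exact le_trans (haS' j hj) (h3 j hj hlt)
        · rw [h1]; exact ht1
        · exact h4 j hj hgt
    · rintro ⟨h1, h2⟩
      by_cases hcase : ∀ j ∉ S, a j ≤ b j
      · refine ⟨(S, a), (hmem _).mpr (Or.inl rfl), ?_, ?_⟩
        · intro j hj; exact (h1 j hj).trans (haS j hj).symm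
        · exact fun j hj => hcase j hj
      · push_neg at hcase
        have hne : (Finset.univ.filter fun j => j ∉ S ∧ b j < a j).Nonempty := by
          obtain ⟨j, hj1, hj2⟩ := hcase
          exact ⟨j, by simp [hj1, hj2]⟩
        set i := (Finset.univ.filter fun j => j ∉ S ∧ b j < a j).min' hne with hi_def
        have hiP : i ∉ S ∧ b i < a i := by
          have := Finset.min'_mem _ hne
          simpa using this
        have hmin : ∀ j, j ∉ S → b j < a j → i ≤ j := by
          intro j hj1 hj2
          exact Finset.min'_le _ _ (by simp [hj1, hj2])
        refine ⟨(insert i S, w i (b i)), (hmem _).mpr (Or.inr ⟨i, hiP.1, b i,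
          h2 i hiP.1, hiP.2, rfl⟩), ?_⟩
        rw [hpiece i hiP.1 (b i) b]
        refine ⟨rfl, h1, ?_, fun j hj _ => h2 j hj⟩
        intro j hjS hji
        by_contra hcon
        exact absurd (hmin j hjS (not_le.mp hcon)) (not_le.mpr hji)
  · -- disjointness
    intro c hc c' hc' hne
    rw [Set.disjoint_left]
    intro b hb hb'
    rcases (hmem c).mp hc with rfl | ⟨i, hi, t, ht1, ht2, rfl⟩ <;>
      rcases (hmem c').mp hc' with rfl | ⟨i', hi', t', ht1', ht2', rfl⟩
    · exact hne rfl
    · obtain ⟨_, hb2⟩ := hb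
      rw [hpiece i' hi' t' b] at hb'
      have h1 : a i' ≤ b i' := hb2 i' (by simpa using hi')
      have h2 := hb'.1
      omega
    · obtain ⟨_, hb2'⟩ := hb'
      rw [hpiece i hi t b] at hb
      have h1 : a i ≤ b i := hb2' i (by simpa using hi)
      have h2 := hb.1
      omega
    · rw [hpiece i hi t b] at hb
      rw [hpiece i' hi' t' b] at hb'
      rcases lt_trichotomy i i' with hlt | heq | hgt
      · have h2 := hb.1
        have := hb'.2.2.1 i hi hlt
        omega
      · subst heq
        have : t = t' := hb.1.symm.trans hb'.1
        exact hne (by rw [this])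
      · have h2 := hb'.1
        have := hb.2.2.1 i' hi' hgt
        omega
  · -- dimension count
    intro c hc hne
    rcases (hmem c).mp hc with rfl | ⟨i, hi, t, ht1, ht2, rfl⟩
    · exact absurd rfl hne
    · have hcard : (insert i S).card = S.card + 1 := Finset.card_insert_of_notMem hi
      have := hScard i hi
      simp only [hcard]
      omega
end GasanovaRR
end

section
/- Let I be a good ideal in K[x,y] (two variables). Then for every k ≥ 1 the power I^k is also a good ideal (with respect to its own boxes, of sizes kd_1 and kd_2). -/
open MvPolynomial

namespace GasanovaRR

/-- Proposition 10.2: in two variables, every power of a good ideal is good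
(w.r.t. its own boxes, of sizes `k·d_1`, `k·d_2`). -/
theorem power_good_two_vars {K : Type*} [Field K]
    (I : Ideal (MvPolynomial (Fin 2) K)) (d : Fin 2 → ℕ)
    (hI : MPrimaryWithCorners I d) (hgood : IsGood I d) :
    ∀ k : ℕ, 1 ≤ k → IsGood (I ^ k) (fun i => k * d i) := by
  intro k hk l hl α hmin
  have hmin' : IsMinGen (I ^ (k * l)) α := by rwa [← pow_mul] at hmin
  have hkl : 1 ≤ k * l := Nat.mul_pos hk hl
  obtain ⟨a, hbox, hsum⟩ := hgood (k * l) hkl α hmin'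
  refine ⟨fun i => a i / k, ?_, ?_⟩
  · intro i
    have h1 := (hbox i).1
    have h2 := (hbox i).2
    constructor
    · calc a i / k * (k * d i) = (a i / k * k) * d i := by ring
        _ ≤ a i * d i := Nat.mul_le_mul_right _ (Nat.div_mul_le_self _ _)
        _ ≤ α i := h1
    · calc α i ≤ (a i + 1) * d i := h2
        _ ≤ ((a i / k + 1) * k) * d i := by
            refine Nat.mul_le_mul_right _ ?_
            have hdm := (Nat.div_add_mod (a i) k).symm
            have hml := Nat.mod_lt (a i) hk
            calc a i + 1 ≤ k * (a i / k) + k := by omega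
              _ = (a i / k + 1) * k := by ring
        _ = (a i / k + 1) * (k * d i) := by ring
  · have hA : (∑ i, a i) = a 0 + a 1 := Fin.sum_univ_two a
    have hB : (∑ i : Fin 2, a i / k) = a 0 / k + a 1 / k := Fin.sum_univ_two _
    set m := k * l with hm
    have hs : a 0 + a 1 + 1 = m := by
      rw [hA] at hsum; omega
    set q0 := a 0 / k with hq0
    set q1 := a 1 / k with hq1
    have h0 : k * q0 + a 0 % k = a 0 := Nat.div_add_mod _ _
    have h1 : k * q1 + a 1 % k = a 1 := Nat.div_add_mod _ _
    have hr0 : a 0 % k < k := Nat.mod_lt _ hk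
    have hr1 : a 1 % k < k := Nat.mod_lt _ hk
    have key : k * q0 + k * q1 + (a 0 % k + a 1 % k + 1) = m := by
      calc k * q0 + k * q1 + (a 0 % k + a 1 % k + 1)
          = (k * q0 + a 0 % k) + (k * q1 + a 1 % k) + 1 := by ring
        _ = a 0 + a 1 + 1 := by rw [h0, h1]
        _ = m := hs
    have hmul1 : k * (q0 + q1) = k * q0 + k * q1 := Nat.mul_add k q0 q1
    have hlt1 : k * (q0 + q1) < k * l := by
      rw [hmul1, ← hm]; omega
    have hub : q0 + q1 < l := Nat.lt_of_mul_lt_mul_left hlt1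
    have hmul2 : k * (q0 + q1 + 2) = k * q0 + k * q1 + 2 * k := by ring
    have hlt2 : k * l < k * (q0 + q1 + 2) := by
      rw [hmul2, ← hm]; omega
    have hlb : l < q0 + q1 + 2 := Nat.lt_of_mul_lt_mul_left hlt2
    rw [hB]
    omega
end GasanovaRR
end
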